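/- Let A ⊆ ℂ be a finite set, m : ℂ → ℂ, and let s ∈ ℂ with s ≠ α for every α ∈ A. Then exp of the derivative at w = 0 of the entire function w ↦ Σ_{α∈A} m(α) (s−α)^{−w} equals Π_{α∈A} (s−α)^{−m(α)}. -/

import Mathlib

open Complex

theorem absolute_zeta_exponential_polynomial (A : Finset ℂ) (m : ℂ → ℂ) (s : ℂ)
    (hs : ∀ α ∈ A, s ≠ α) :
    Complex.exp (deriv (fun w : ℂ => ∑ α ∈ A, m α * (s - α) ^ (-w)) 0) =
    ∏ α ∈ A, (s - α) ^ (-(m α)) := by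
  have hne : ∀ α ∈ A, s - α ≠ 0 := fun α hα => sub_ne_zero.mpr (hs α hα)
  have hd : HasDerivAt (fun w : ℂ => ∑ α ∈ A, m α * (s - α) ^ (-w))
      (∑ α ∈ A, m α * -Complex.log (s - α)) 0 := by
    refine HasDerivAt.fun_sum fun α hα => ?_
    have h2 : HasDerivAt (fun w : ℂ => (s - α) ^ (-w))
        ((s - α) ^ (-(0:ℂ)) * Complex.log (s - α) * (-1)) 0 :=
      (hasDerivAt_neg (0:ℂ)).const_cpow (Or.inl (hne α hα))
    simpa [cpow_zero] using h2.const_mul (m α)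
  rw [hd.deriv, Complex.exp_sum]
  refine Finset.prod_congr rfl fun α hα => ?_
  rw [cpow_def_of_ne_zero (hne α hα)]
  ring_nf
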